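/- For the operator X_1 = \bar{D}^{-1} (d/dt_v) \bar{D} written as X_1 = \sum_{j\ge 0} x_j \partial/\partial t_j with x_0 = 1 and x_j = \bar{D}^{-1}(\partial f_{j-1}/\partial t_v) for j ≥ 1, the coefficients satisfy the product formula x_{j+1} = x_1 \cdot D(x_1) \cdot D^2(x_1) \cdots D^j(x_1), equivalently x_{j+1} = x_j \cdot D^j(x_1). -/
import Mathlib


/-- For `X₁ = D̄⁻¹ (d/dt_v) D̄ = Σ xⱼ ∂/∂tⱼ`, with `x₀ = 1` and
`xⱼ₊₁ = D̄⁻¹(∂fⱼ/∂t_v)`, the coefficients satisfy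
`x_{j+1} = x₁ · D(x₁) ⋯ Dʲ(x₁)`, equivalently `x_{j+1} = xⱼ · Dʲ(x₁)`.
Here `g j = ∂fⱼ/∂t_v` satisfies the chain-rule recursion
`∂f_{j+1}/∂t_v = D^{j+1}(∂f/∂t_v) · ∂fⱼ/∂t_v`, and `D`, `D̄` commute. -/
theorem stmt1 {R : Type*} [CommRing R]
    (D : R →+* R) (Dbar : R ≃+* R)
    (hcomm : ∀ r : R, Dbar (D r) = D (Dbar r))
    (g : ℕ → R)                                        -- `g j = ∂fⱼ/∂t_v`
    (hg : ∀ j, g (j+1) = (fun r => D r)^[j+1] (g 0) * g j)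
    (x : ℕ → R)
    (hx0 : x 0 = 1)
    (hx : ∀ j, x (j+1) = Dbar.symm (g j)) :
    (∀ j, x (j+1) = x j * (fun r => D r)^[j] (x 1)) ∧
    (∀ j, x (j+1) = ∏ i ∈ Finset.range (j+1), (fun r => D r)^[i] (x 1)) := by
  have hsymm : ∀ r : R, Dbar.symm (D r) = D (Dbar.symm r) := by
    intro r
    apply Dbar.injective
    rw [hcomm, Dbar.apply_symm_apply, Dbar.apply_symm_apply]
  have hsymm_iter : ∀ (n : ℕ) (r : R),
      Dbar.symm ((fun r => D r)^[n] r) = (fun r => D r)^[n] (Dbar.symm r) := by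
    intro n
    induction n with
    | zero => intro r; simp
    | succ n ih =>
      intro r
      rw [Function.iterate_succ_apply', Function.iterate_succ_apply', hsymm, ih]
  have key : ∀ j, x (j+1) = x j * (fun r => D r)^[j] (x 1) := by
    intro j
    cases j with
    | zero => simp [hx0]
    | succ j =>
      rw [hx (j+1), hg j, map_mul, hsymm_iter, ← hx j, mul_comm, hx 0]
  refine ⟨key, ?_⟩
  intro j
  induction j with
  | zero => simp
  | succ j ih =>
    rw [Finset.prod_range_succ, ← ih, key]
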